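/- arXiv:2502.06176 — 2 statements merged into one kernel-verified Lean document; each statement's English description precedes it below -/
import Mathlib

section
/- Fix λ > 0 and z ∈ K. Let (z_n) be a sequence in K with z_n → z in norm, for each n let f_n ∈ C be a minimizer of J_{λ,z_n} over C, and let f ∈ C be the minimizer of J_{λ,z} over C. Then f_n converges strongly to f in H, i.e., ‖f_n − f‖ → 0. -/
open Filter

lemma mid_norm_sq {E : Type*} [NormedAddCommGroup E] [InnerProductSpace ℝ E] (x y : E) :
    ‖(1/2:ℝ) • x + (1/2:ℝ) • y‖ ^ 2 = ‖x‖ ^ 2 / 2 + ‖y‖ ^ 2 / 2 - ‖x - y‖ ^ 2 / 4 := by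
  have hs : (1/2:ℝ) • x + (1/2:ℝ) • y = (1/2:ℝ) • (x + y) := by rw [smul_add]
  have h := parallelogram_law_with_norm ℝ x y
  have habs : |(1/2:ℝ)| = 1/2 := by norm_num
  rw [hs, norm_smul]
  simp only [Real.norm_eq_abs, habs]
  nlinarith [norm_nonneg (x + y)]

lemma strong_min {H K : Type*} [NormedAddCommGroup H] [InnerProductSpace ℝ H]
    [NormedAddCommGroup K] [InnerProductSpace ℝ K]
    (A : H →L[ℝ] K) (C : Set H) (hCconv : Convex ℝ C) (lam : ℝ) (z : K)
    (f : H) (hfC : f ∈ C)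
    (hf : ∀ g ∈ C,
      (1 / 2) * ‖A f - z‖ ^ 2 + (lam / 2) * ‖f‖ ^ 2 ≤
        (1 / 2) * ‖A g - z‖ ^ 2 + (lam / 2) * ‖g‖ ^ 2)
    (g : H) (hgC : g ∈ C) :
    lam / 4 * ‖g - f‖ ^ 2 ≤
      ((1 / 2) * ‖A g - z‖ ^ 2 + (lam / 2) * ‖g‖ ^ 2) -
        ((1 / 2) * ‖A f - z‖ ^ 2 + (lam / 2) * ‖f‖ ^ 2) := by
  set m : H := (1/2:ℝ) • g + (1/2:ℝ) • f with hm_def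
  have hm : m ∈ C := hCconv hgC hfC (by norm_num) (by norm_num) (by norm_num)
  have h := hf m hm
  have e1 : ‖A m - z‖ ^ 2 = ‖A g - z‖ ^ 2 / 2 + ‖A f - z‖ ^ 2 / 2 - ‖A g - A f‖ ^ 2 / 4 := by
    have h2 := mid_norm_sq (A g - z) (A f - z)
    have heq : (1/2:ℝ) • (A g - z) + (1/2:ℝ) • (A f - z) = A m - z := by
      simp only [hm_def, map_add, map_smul]
      module
    have heq2 : (A g - z) - (A f - z) = A g - A f := by abel
    rw [heq, heq2] at h2
    exact h2
  have e2 : ‖m‖ ^ 2 = ‖g‖ ^ 2 / 2 + ‖f‖ ^ 2 / 2 - ‖g - f‖ ^ 2 / 4 := mid_norm_sq g f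
  rw [e1, e2] at h
  nlinarith [sq_nonneg ‖A g - A f‖]

/-- Stability of the Tikhonov-regularized solutions: if `z_n → z` and `f_n` is a minimizer
of `J_{lam, z_n}` over `C` while `f` is the minimizer of `J_{lam, z}` over `C`,
then `f_n → f` strongly in `H`. -/
theorem tikhonov_stability
    {H K : Type*} [NormedAddCommGroup H] [InnerProductSpace ℝ H] [CompleteSpace H]
    [NormedAddCommGroup K] [InnerProductSpace ℝ K] [CompleteSpace K]
    (A : H →L[ℝ] K) (C : Set H) (hCne : C.Nonempty) (hCcl : IsClosed C)
    (hCconv : Convex ℝ C) (lam : ℝ) (hlam : 0 < lam) (z : K)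
    (zn : ℕ → K) (hzn : Tendsto zn atTop (nhds z))
    (fn : ℕ → H) (hfnC : ∀ n, fn n ∈ C)
    (hfn : ∀ n, ∀ g ∈ C,
      (1 / 2) * ‖A (fn n) - zn n‖ ^ 2 + (lam / 2) * ‖fn n‖ ^ 2 ≤
        (1 / 2) * ‖A g - zn n‖ ^ 2 + (lam / 2) * ‖g‖ ^ 2)
    (f : H) (hfC : f ∈ C)
    (hf : ∀ g ∈ C,
      (1 / 2) * ‖A f - z‖ ^ 2 + (lam / 2) * ‖f‖ ^ 2 ≤
        (1 / 2) * ‖A g - z‖ ^ 2 + (lam / 2) * ‖g‖ ^ 2) :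
    Tendsto fn atTop (nhds f) := by
  have key : ∀ n, ‖fn n - f‖ ≤ 2 / lam * (‖A‖ * ‖zn n - z‖) := by
    intro n
    have h1 := strong_min A C hCconv lam (zn n) (fn n) (hfnC n) (hfn n) f hfC
    have h2 := strong_min A C hCconv lam z f hfC hf (fn n) (hfnC n)
    -- cross term identity
    have cross :
        (1 / 2) * ‖A f - zn n‖ ^ 2 - (1 / 2) * ‖A f - z‖ ^ 2 +
          ((1 / 2) * ‖A (fn n) - z‖ ^ 2 - (1 / 2) * ‖A (fn n) - zn n‖ ^ 2) =
          (inner ℝ (z - zn n) (A f - A (fn n)) : ℝ) := by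
      simp only [norm_sub_sq_real, inner_sub_left, inner_sub_right]
      linarith [real_inner_comm (A f) (zn n), real_inner_comm (A f) z,
        real_inner_comm (A (fn n)) z, real_inner_comm (A (fn n)) (zn n)]
    have hip : (inner ℝ (z - zn n) (A f - A (fn n)) : ℝ) ≤ ‖zn n - z‖ * (‖A‖ * ‖fn n - f‖) := by
      calc (inner ℝ (z - zn n) (A f - A (fn n)) : ℝ) ≤ ‖z - zn n‖ * ‖A f - A (fn n)‖ :=
            real_inner_le_norm _ _
        _ = ‖zn n - z‖ * ‖A (f - fn n)‖ := by rw [norm_sub_rev, map_sub]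
        _ ≤ ‖zn n - z‖ * (‖A‖ * ‖f - fn n‖) := by
            exact mul_le_mul_of_nonneg_left (A.le_opNorm _) (norm_nonneg _)
        _ = ‖zn n - z‖ * (‖A‖ * ‖fn n - f‖) := by rw [norm_sub_rev f]
    have hd : lam / 2 * ‖fn n - f‖ ^ 2 ≤ ‖zn n - z‖ * (‖A‖ * ‖fn n - f‖) := by
      have hrev : ‖f - fn n‖ = ‖fn n - f‖ := norm_sub_rev _ _
      rw [hrev] at h1
      nlinarith [h1, h2, cross, hip]
    rcases eq_or_lt_of_le (norm_nonneg (fn n - f)) with h0 | h0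
    · rw [← h0]
      positivity
    · have h' : lam / 2 * ‖fn n - f‖ ≤ ‖zn n - z‖ * ‖A‖ := by
        refine le_of_mul_le_mul_right ?_ h0
        nlinarith [hd]
      have hl : (0:ℝ) < 2 / lam := by positivity
      have hm := mul_le_mul_of_nonneg_left h' (le_of_lt hl)
      calc ‖fn n - f‖ = 2 / lam * (lam / 2 * ‖fn n - f‖) := by field_simp
        _ ≤ 2 / lam * (‖zn n - z‖ * ‖A‖) := hm
        _ = 2 / lam * (‖A‖ * ‖zn n - z‖) := by ring
  have hzero : Tendsto (fun n => ‖fn n - f‖) atTop (nhds 0) := by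
    have hz0 : Tendsto (fun n => 2 / lam * (‖A‖ * ‖zn n - z‖)) atTop (nhds 0) := by
      have : Tendsto (fun n => ‖zn n - z‖) atTop (nhds 0) := by
        rw [← tendsto_iff_norm_sub_tendsto_zero] at *
        exact hzn
      have := (this.const_mul ‖A‖).const_mul (2 / lam)
      simpa using this
    exact squeeze_zero (fun n => norm_nonneg _) key hz0
  rw [tendsto_iff_norm_sub_tendsto_zero]
  exact hzero
end

section
/- Let f₊ ∈ C and z ∈ K satisfy A f₊ = z, and assume the source condition: there exists ζ ∈ K such that f₊ is the metric projection of A*ζ onto C, i.e., ‖f₊ − A*ζ‖ ≤ ‖g − A*ζ‖ for all g ∈ C. Let ε ≥ 0, let z^ε ∈ K satisfy ‖z^ε − z‖ ≤ ε, let λ > 0, and let f ∈ C be the minimizer over C of J_{λ,z^ε}(g) = (1/2)‖A g − z^ε‖² + (λ/2)‖g‖². Then ‖f₊ − f‖ ≤ √λ·‖ζ‖ + ε/√λ. -/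
set_option maxHeartbeats 1000000 in
/-- Convergence rate for constrained Tikhonov regularization under the source condition
`f₊ = Proj_C (A* ζ)`: if `A f₊ = z`, `‖z^ε − z‖ ≤ ε` and `f` minimizes
`J_{lam, z^ε}` over `C`, then `‖f₊ − f‖ ≤ √lam ‖ζ‖ + ε / √lam`. -/
theorem tikhonov_convergence_rate
    {H K : Type*} [NormedAddCommGroup H] [InnerProductSpace ℝ H] [CompleteSpace H]
    [NormedAddCommGroup K] [InnerProductSpace ℝ K] [CompleteSpace K]
    (A : H →L[ℝ] K) (C : Set H) (hCne : C.Nonempty) (hCcl : IsClosed C)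
    (hCconv : Convex ℝ C)
    (fplus : H) (hfplus : fplus ∈ C) (z : K) (hz : A fplus = z)
    (ζ : K) (hsource : ∀ g ∈ C,
      ‖fplus - ContinuousLinearMap.adjoint A ζ‖ ≤ ‖g - ContinuousLinearMap.adjoint A ζ‖)
    (ε : ℝ) (hε : 0 ≤ ε) (zeps : K) (hznoise : ‖zeps - z‖ ≤ ε)
    (lam : ℝ) (hlam : 0 < lam)
    (f : H) (hfC : f ∈ C)
    (hf : ∀ g ∈ C,
      (1 / 2) * ‖A f - zeps‖ ^ 2 + (lam / 2) * ‖f‖ ^ 2 ≤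
        (1 / 2) * ‖A g - zeps‖ ^ 2 + (lam / 2) * ‖g‖ ^ 2) :
    ‖fplus - f‖ ≤ Real.sqrt lam * ‖ζ‖ + ε / Real.sqrt lam := by
  set u := ContinuousLinearMap.adjoint A ζ with hu
  haveI : Nonempty C := ⟨⟨fplus, hfplus⟩⟩
  -- projection characterization
  have hproj : (inner ℝ (u - fplus) (f - fplus) : ℝ) ≤ 0 := by
    have heq : ‖u - fplus‖ = ⨅ w : C, ‖u - (w : H)‖ := by
      apply le_antisymm
      · apply le_ciInf
        intro w
        rw [norm_sub_rev u fplus, norm_sub_rev u (w : H)]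
        exact hsource w w.2
      · exact ciInf_le ⟨(0:ℝ), by rintro x ⟨w, rfl⟩; exact norm_nonneg _⟩
          (⟨fplus, hfplus⟩ : C)
    exact (norm_eq_iInf_iff_real_inner_le_zero hCconv hfplus).mp heq f hfC
  -- adjoint identity
  have hAdj : (inner ℝ u (f - fplus) : ℝ) = (inner ℝ ζ (A f - z) : ℝ) := by
    rw [hu, ContinuousLinearMap.adjoint_inner_left, map_sub, hz]
  have hsplit : (inner ℝ ζ (A f - z) : ℝ) = (inner ℝ ζ (A f - zeps) : ℝ) + (inner ℝ ζ (zeps - z) : ℝ) := by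
    rw [← inner_add_right]
    congr 1
    abel
  have hCS1 : -(‖ζ‖ * ‖A f - zeps‖) ≤ (inner ℝ (ζ) (A f - zeps) : ℝ) :=
    neg_le_of_abs_le (abs_real_inner_le_norm _ _)
  have hCS2 : -(‖ζ‖ * ‖zeps - z‖) ≤ (inner ℝ (ζ) (zeps - z) : ℝ) :=
    neg_le_of_abs_le (abs_real_inner_le_norm _ _)
  -- minimization at g = fplus
  have hJ := hf fplus hfplus
  have hzn : ‖A fplus - zeps‖ ≤ ε := by
    rw [hz, norm_sub_rev]; exact hznoise
  have hzn2 : ‖A fplus - zeps‖ ^ 2 ≤ ε ^ 2 :=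
    pow_le_pow_left₀ (norm_nonneg _) hzn 2
  -- norm expansion
  have hexp : ‖f - fplus‖ ^ 2 = ‖f‖ ^ 2 - 2 * (inner ℝ (f) (fplus) : ℝ) + ‖fplus‖ ^ 2 :=
    norm_sub_sq_real f fplus
  have hinner2 : (inner ℝ fplus (f - fplus) : ℝ) = (inner ℝ f fplus : ℝ) - ‖fplus‖ ^ 2 := by
    rw [inner_sub_right, real_inner_self_eq_norm_sq, real_inner_comm]
  have hinner1 : (inner ℝ (u - fplus) (f - fplus) : ℝ) = (inner ℝ u (f - fplus) : ℝ) - (inner ℝ fplus (f - fplus) : ℝ) := by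
    rw [inner_sub_left]
  -- key quadratic estimate
  have hζnn : (0:ℝ) ≤ ‖ζ‖ := norm_nonneg _
  have htnn : (0:ℝ) ≤ ‖A f - zeps‖ := norm_nonneg _
  have hznle : ‖zeps - z‖ ≤ ε := hznoise
  have main : lam * ‖f - fplus‖ ^ 2 ≤ (ε + lam * ‖ζ‖) ^ 2 := by
    nlinarith [sq_nonneg (‖A f - zeps‖ - lam * ‖ζ‖), sq_nonneg (‖zeps - z‖),
      mul_le_mul_of_nonneg_left hznle hζnn]
  -- conclude
  have hs : Real.sqrt lam ^ 2 = lam := Real.sq_sqrt hlam.le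
  have hspos : 0 < Real.sqrt lam := Real.sqrt_pos.mpr hlam
  have hRnn : 0 ≤ Real.sqrt lam * ‖ζ‖ + ε / Real.sqrt lam := by positivity
  have hmul : (Real.sqrt lam * ‖ζ‖ + ε / Real.sqrt lam) * Real.sqrt lam = lam * ‖ζ‖ + ε := by
    rw [add_mul, div_mul_cancel₀ _ hspos.ne', mul_comm (Real.sqrt lam) ‖ζ‖, mul_assoc,
      Real.mul_self_sqrt hlam.le, mul_comm ‖ζ‖ lam]
  have hm2 : lam * (Real.sqrt lam * ‖ζ‖ + ε / Real.sqrt lam) ^ 2 = (lam * ‖ζ‖ + ε) ^ 2 := by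
    calc lam * (Real.sqrt lam * ‖ζ‖ + ε / Real.sqrt lam) ^ 2
        = ((Real.sqrt lam * ‖ζ‖ + ε / Real.sqrt lam) * Real.sqrt lam) ^ 2 := by
          rw [mul_pow, hs]; ring
      _ = (lam * ‖ζ‖ + ε) ^ 2 := by rw [hmul]
  have h2 : ‖fplus - f‖ ^ 2 ≤ (Real.sqrt lam * ‖ζ‖ + ε / Real.sqrt lam) ^ 2 := by
    rw [norm_sub_rev]
    nlinarith [main, hm2, hlam]
  calc ‖fplus - f‖ = Real.sqrt (‖fplus - f‖ ^ 2) := (Real.sqrt_sq (norm_nonneg _)).symm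
    _ ≤ Real.sqrt ((Real.sqrt lam * ‖ζ‖ + ε / Real.sqrt lam) ^ 2) := Real.sqrt_le_sqrt h2
    _ = _ := Real.sqrt_sq hRnn
end
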